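/- Suppose α(m) is a nonnegative sequence with Σ_{m≥1} m^λ α(m)^{1−2/δ} < ∞ for some λ > 1 − 2/δ and δ > 2, and suppose C > 0. Let h_n → 0 and set m_n = (h_n² |log h_n²|)^{-1}. Then m_n → ∞, m_n h_n² → 0, and Σ_{j=m_n+1}^{n} |c_j| → 0 whenever |c_j| ≤ C α(j)^{1−2/δ} h_n^{4/δ−2} for all j, provided h_n satisfies n h_n^{(λ+2−2/δ)/(λ+2/δ)} = O(n^{ε₀}) for some ε₀ > 0. -/

import Mathlib

open Filter Topology

lemma aux_abslog_mul_rpow {r : ℝ} (hr : 0 < r) :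
    Tendsto (fun x : ℝ => |Real.log x| * x ^ r) (𝓝[>] 0) (𝓝 0) := by
  have h1 := (tendsto_log_mul_rpow_nhdsGT_zero hr).abs
  rw [abs_zero] at h1
  refine h1.congr' ?_
  filter_upwards [self_mem_nhdsWithin] with x hx
  rw [abs_mul, abs_of_pos (Real.rpow_pos_of_pos hx r)]

lemma aux_rpow_abslog {a b : ℝ} (ha : 0 < a) (hb : 0 < b) :
    Tendsto (fun x : ℝ => x ^ a * |Real.log x| ^ b) (𝓝[>] 0) (𝓝 0) := by
  have key : Tendsto (fun x : ℝ => (|Real.log x| * x ^ (a / b)) ^ b) (𝓝[>] 0) (𝓝 0) := by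
    have := (aux_abslog_mul_rpow (div_pos ha hb)).rpow_const (Or.inr hb.le)
    rwa [Real.zero_rpow hb.ne'] at this
  refine key.congr' ?_
  filter_upwards [self_mem_nhdsWithin] with x hx
  rw [Real.mul_rpow (abs_nonneg _) (Real.rpow_pos_of_pos hx _).le,
    ← Real.rpow_mul hx.le, div_mul_cancel₀ a hb.ne', mul_comm]

/-- The summability argument controlling the covariances of distant terms:
with `m_n = (h_n² |log h_n²|)⁻¹`, `m_n → ∞`, `m_n h_n² → 0`, and the tail sum
`Σ_{j=m_n+1}^n |c_j|` tends to `0` under the bound `|c_j| ≤ C α(j)^{1−2/δ} h_n^{4/δ−2}`. -/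
theorem covariance_tail_sum_vanishes
    (δ lam : ℝ) (hδ : 2 < δ) (hlam : 1 - 2 / δ < lam)
    (α : ℕ → ℝ) (hα : ∀ m, 0 ≤ α m)
    (hsum : Summable (fun m : ℕ => (m : ℝ) ^ lam * α m ^ (1 - 2 / δ)))
    (C : ℝ) (hC : 0 < C)
    (h : ℕ → ℝ) (hpos : ∀ n, 0 < h n) (hlt : ∀ n, h n < 1)
    (hto : Tendsto h atTop (𝓝 0))
    (ε₀ : ℝ) (hε₀ : 0 < ε₀)
    (hband : (fun n : ℕ => (n : ℝ) * h n ^ ((lam + 2 - 2 / δ) / (lam + 2 / δ)))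
      =O[atTop] (fun n : ℕ => (n : ℝ) ^ ε₀))
    (mR : ℕ → ℝ) (hmR : ∀ n, mR n = (h n ^ 2 * |Real.log (h n ^ 2)|)⁻¹)
    (m : ℕ → ℕ) (hm : ∀ n, m n = ⌊mR n⌋₊)
    (c : ℕ → ℕ → ℝ)
    (hc : ∀ n j, |c n j| ≤ C * α j ^ (1 - 2 / δ) * h n ^ (4 / δ - 2)) :
    Tendsto mR atTop atTop ∧
    Tendsto (fun n => mR n * h n ^ 2) atTop (𝓝 0) ∧
    Tendsto (fun n => ∑ j ∈ Finset.Ioc (m n) n, |c n j|) atTop (𝓝 0) := by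
  have hδ0 : (0:ℝ) < δ := lt_trans two_pos hδ
  have hβ0 : 0 < 1 - 2 / δ := by
    have : 2 / δ < 1 := (div_lt_one hδ0).mpr hδ
    linarith
  have hlam0 : 0 < lam := lt_trans hβ0 hlam
  set β := 1 - 2 / δ with hβdef
  have hsq_pos : ∀ n, 0 < h n ^ 2 := fun n => pow_pos (hpos n) 2
  have hsq_lt : ∀ n, h n ^ 2 < 1 := fun n => pow_lt_one₀ (hpos n).le (hlt n) two_ne_zero
  have hlogpos : ∀ n, 0 < |Real.log (h n ^ 2)| := by
    intro n
    rw [abs_pos]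
    exact ne_of_lt (Real.log_neg (hsq_pos n) (hsq_lt n))
  have hXpos : ∀ n, 0 < h n ^ 2 * |Real.log (h n ^ 2)| := fun n =>
    mul_pos (hsq_pos n) (hlogpos n)
  have hsq_to : Tendsto (fun n => h n ^ 2) atTop (𝓝[>] 0) := by
    refine tendsto_nhdsWithin_of_tendsto_nhds_of_eventually_within _ ?_
      (Eventually.of_forall hsq_pos)
    simpa using (hto.pow 2)
  have hX_to : Tendsto (fun n => h n ^ 2 * |Real.log (h n ^ 2)|) atTop (𝓝 0) := by
    have key : Tendsto (fun x : ℝ => x * |Real.log x|) (𝓝[>] 0) (𝓝 0) := by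
      have h1 := aux_abslog_mul_rpow (r := 1) one_pos
      refine h1.congr' ?_
      filter_upwards [self_mem_nhdsWithin] with x hx
      rw [Real.rpow_one, mul_comm]
    exact key.comp hsq_to
  have h_mR_to : Tendsto mR atTop atTop := by
    have h1 : Tendsto (fun n => h n ^ 2 * |Real.log (h n ^ 2)|) atTop (𝓝[>] 0) :=
      tendsto_nhdsWithin_of_tendsto_nhds_of_eventually_within _ hX_to
        (Eventually.of_forall hXpos)
    exact h1.inv_tendsto_nhdsGT_zero.congr fun n => by rw [hmR n]; rfl
  refine ⟨h_mR_to, ?_, ?_⟩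
  · have heq : ∀ n, mR n * h n ^ 2 = |Real.log (h n ^ 2)|⁻¹ := by
      intro n
      rw [hmR n, mul_inv, mul_comm ((h n ^ 2)⁻¹) _, mul_assoc,
        inv_mul_cancel₀ (hsq_pos n).ne', mul_one]
    have hlog_to : Tendsto (fun n => |Real.log (h n ^ 2)|) atTop atTop :=
      tendsto_abs_atBot_atTop.comp (Real.tendsto_log_nhdsGT_zero.comp hsq_to)
    exact hlog_to.inv_tendsto_atTop.congr fun n => (heq n).symm
  · set S := ∑' j : ℕ, (j : ℝ) ^ lam * α j ^ β with hS
    have hterm_nonneg : ∀ j : ℕ, 0 ≤ (j : ℝ) ^ lam * α j ^ β := fun j =>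
      mul_nonneg (Real.rpow_nonneg (Nat.cast_nonneg j) _) (Real.rpow_nonneg (hα j) _)
    have hS0 : 0 ≤ S := tsum_nonneg hterm_nonneg
    have hev : ∀ᶠ n in atTop, (2:ℝ) ≤ mR n := h_mR_to.eventually_ge_atTop 2
    have hbound : ∀ᶠ n in atTop,
        (∑ j ∈ Finset.Ioc (m n) n, |c n j|)
          ≤ (C * S * 2 ^ lam) *
            (h n ^ (4 / δ - 2) * (h n ^ 2 * |Real.log (h n ^ 2)|) ^ lam) := by
      filter_upwards [hev] with n hn2
      have hm1 : 1 ≤ m n := by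
        rw [hm n]
        exact Nat.le_floor (by exact_mod_cast le_trans (by norm_num) hn2)
      have hmpos : (0:ℝ) < (m n : ℝ) := by exact_mod_cast hm1
      have he_pos : 0 < h n ^ (4 / δ - 2) := Real.rpow_pos_of_pos (hpos n) _
      have step1 : (∑ j ∈ Finset.Ioc (m n) n, |c n j|)
          ≤ C * h n ^ (4 / δ - 2) * ∑ j ∈ Finset.Ioc (m n) n, α j ^ β := by
        rw [Finset.mul_sum]
        refine Finset.sum_le_sum fun j _ => ?_
        calc |c n j| ≤ C * α j ^ β * h n ^ (4 / δ - 2) := hc n j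
          _ = C * h n ^ (4 / δ - 2) * α j ^ β := by ring
      have step2 : (∑ j ∈ Finset.Ioc (m n) n, α j ^ β)
          ≤ (m n : ℝ) ^ (-lam) * S := by
        have hle : (∑ j ∈ Finset.Ioc (m n) n, α j ^ β)
            ≤ ∑ j ∈ Finset.Ioc (m n) n, (m n : ℝ) ^ (-lam) * ((j : ℝ) ^ lam * α j ^ β) := by
          refine Finset.sum_le_sum fun j hj => ?_
          have hjm : (m n : ℝ) ≤ (j : ℝ) := by
            exact_mod_cast (Finset.mem_Ioc.mp hj).1.le
          have hone : (1:ℝ) ≤ (m n : ℝ) ^ (-lam) * (j : ℝ) ^ lam := by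
            rw [Real.rpow_neg hmpos.le, inv_mul_eq_div,
              le_div_iff₀ (Real.rpow_pos_of_pos hmpos _), one_mul]
            exact Real.rpow_le_rpow hmpos.le hjm hlam0.le
          calc α j ^ β = 1 * α j ^ β := (one_mul _).symm
            _ ≤ ((m n : ℝ) ^ (-lam) * (j : ℝ) ^ lam) * α j ^ β :=
              mul_le_mul_of_nonneg_right hone (Real.rpow_nonneg (hα j) _)
            _ = (m n : ℝ) ^ (-lam) * ((j : ℝ) ^ lam * α j ^ β) := by ring
        refine le_trans hle ?_
        rw [← Finset.mul_sum]
        refine mul_le_mul_of_nonneg_left ?_ (Real.rpow_nonneg hmpos.le _)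
        exact Summable.sum_le_tsum _ (fun j _ => hterm_nonneg j) hsum
      have step3 : (m n : ℝ) ^ (-lam)
          ≤ 2 ^ lam * (h n ^ 2 * |Real.log (h n ^ 2)|) ^ lam := by
        have hfloor : mR n / 2 ≤ (m n : ℝ) := by
          rw [hm n]
          have h1 : mR n - 1 < (⌊mR n⌋₊ : ℝ) := Nat.sub_one_lt_floor _
          nlinarith
        have hhalf : 0 < mR n / 2 := by linarith
        refine le_trans (Real.rpow_le_rpow_of_nonpos hhalf hfloor
          (neg_nonpos_of_nonneg hlam0.le)) ?_
        have hrw : mR n / 2 = (2 * (h n ^ 2 * |Real.log (h n ^ 2)|))⁻¹ := by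
          rw [hmR n, mul_inv]
          ring
        rw [hrw, Real.inv_rpow (by positivity), Real.rpow_neg (by positivity), inv_inv,
          Real.mul_rpow (by norm_num) (hXpos n).le]
      calc (∑ j ∈ Finset.Ioc (m n) n, |c n j|)
          ≤ C * h n ^ (4 / δ - 2) * ((m n : ℝ) ^ (-lam) * S) := le_trans step1
            (mul_le_mul_of_nonneg_left step2 (by positivity))
        _ ≤ C * h n ^ (4 / δ - 2) *
            ((2 ^ lam * (h n ^ 2 * |Real.log (h n ^ 2)|) ^ lam) * S) := by
            refine mul_le_mul_of_nonneg_left ?_ (by positivity)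
            exact mul_le_mul_of_nonneg_right step3 hS0
        _ = (C * S * 2 ^ lam) *
            (h n ^ (4 / δ - 2) * (h n ^ 2 * |Real.log (h n ^ 2)|) ^ lam) := by ring
    have hcore : Tendsto (fun n =>
        h n ^ (4 / δ - 2) * (h n ^ 2 * |Real.log (h n ^ 2)|) ^ lam) atTop (𝓝 0) := by
      have ha : 0 < lam + (2 / δ - 1) := by
        have h2 : (1:ℝ) - 2 / δ < lam := hβdef ▸ hlam
        linarith
      have hgen := (aux_rpow_abslog ha hlam0).comp hsq_to
      refine hgen.congr fun n => ?_
      simp only [Function.comp_apply]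
      rw [Real.mul_rpow (hsq_pos n).le (abs_nonneg _), ← mul_assoc]
      congr 1
      have hx : (h n ^ 2 : ℝ) = h n ^ (2:ℝ) := by
        rw [← Real.rpow_natCast (h n) 2]; norm_num
      rw [hx, ← Real.rpow_mul (hpos n).le, ← Real.rpow_mul (hpos n).le,
        ← Real.rpow_add (hpos n)]
      congr 1
      ring
    have hmaj : Tendsto (fun n =>
        (C * S * 2 ^ lam) *
          (h n ^ (4 / δ - 2) * (h n ^ 2 * |Real.log (h n ^ 2)|) ^ lam)) atTop (𝓝 0) := by
      simpa using hcore.const_mul (C * S * 2 ^ lam)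
    refine squeeze_zero' ?_ hbound hmaj
    filter_upwards with n
    exact Finset.sum_nonneg fun j _ => abs_nonneg _
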